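/- Let K be a commutative ring and M a nontrivial K-module (there exists x ∈ M with x ≠ 0). Then the set D = {v : Fin 2 → M | v 0 = 0 ∨ v 1 = 0} is not an algebraic set over M; that is, there is no subset T of the free module (Fin 2 →₀ K) such that D = {v : Fin 2 → M | ∀ f ∈ T, (∑ i, f i • v i) = 0}. (Hence no nontrivial module is an equational domain in the variety of all K-modules.) -/
import Mathlib


theorem union_of_axes_not_algebraic_over_nontrivial_module
    (K : Type*) (M : Type*) [CommRing K] [AddCommGroup M] [Module K M]
    (hM : ∃ x : M, x ≠ 0) :
    ¬ ∃ T : Set (Fin 2 →₀ K),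
      {v : Fin 2 → M | v 0 = 0 ∨ v 1 = 0} =
        {v : Fin 2 → M | ∀ f ∈ T, ∑ i, f i • v i = 0} := by
  rintro ⟨T, hT⟩
  obtain ⟨x, hx⟩ := hM
  have h1 : (![x, 0] : Fin 2 → M) ∈ {v : Fin 2 → M | v 0 = 0 ∨ v 1 = 0} := by
    right; rfl
  have h2 : (![0, x] : Fin 2 → M) ∈ {v : Fin 2 → M | v 0 = 0 ∨ v 1 = 0} := by
    left; rfl
  rw [hT] at h1 h2
  have h3 : (![x, x] : Fin 2 → M) ∈ {v : Fin 2 → M | ∀ f ∈ T, ∑ i, f i • v i = 0} := by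
    intro f hf
    have e1 := h1 f hf
    have e2 := h2 f hf
    simp [Fin.sum_univ_two] at e1 e2 ⊢
    rw [e1, e2, add_zero]
  rw [← hT] at h3
  rcases h3 with h | h <;> exact hx (by simpa using h)
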